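/- Let θ ∈ (0,1), and let ξ : 𝔻° → S° be the conformal map ξ(w) = (1/iπ) log((w·e^{−iπθ} − e^{iπθ})/(w−1)) with ξ(0) = θ. Let M₀, M₁ > 0 and let h : 𝕋 → ℂ be measurable with ĥ(n) = 0 for all n < 0, |h| ≤ M₀ a.e. on the arc Γ₀ = {e^{it} : 2πθ < t < 2π}, and |h| ≤ M₁ a.e. on Γ₁ = {e^{it} : 0 < t < 2πθ}. Then the analytic function u(w) = ∑_{n≥0} ĥ(n) wⁿ satisfies |u(ξ^{−1}(z))| ≤ M₀^{1 − Re z} · M₁^{Re z} for all z ∈ S°. -/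

import Mathlib

open Complex MeasureTheory Filter Topology
open scoped Real

noncomputable def circCoeff (H : ℝ → ℂ) (n : ℤ) : ℂ :=
  (1 / (2 * π) : ℝ) * ∫ t in (0:ℝ)..(2 * π), Complex.exp (-(n : ℂ) * t * I) * H t

noncomputable def xiInv (θ : ℝ) (z : ℂ) : ℂ :=
  (Complex.exp ((π * θ : ℝ) * I) - Complex.exp ((π : ℂ) * z * I)) /
    (Complex.exp (-(π * θ : ℝ) * I) - Complex.exp ((π : ℂ) * z * I))

set_option maxHeartbeats 1000000

namespace PoissonVI

noncomputable def poi (w : ℂ) (t : ℝ) : ℝ :=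
  (1 - Complex.normSq w) / Complex.normSq (Complex.exp (t * I) - w)



lemma abs_expI (t : ℝ) : ‖(Complex.exp ((t:ℂ) * I))‖ = 1 :=
  Complex.norm_exp_ofReal_mul_I t

lemma abs_expNegI (t : ℝ) : ‖(Complex.exp (-(t:ℂ) * I))‖ = 1 := by
  simpa using abs_expI (-t)

lemma one_sub_ne {w : ℂ} (hw : ‖w‖ < 1) (z : ℂ) (hz : ‖z‖ = 1) :
    1 - w * z ≠ 0 := by
  intro h
  have h1 : w * z = 1 := by linear_combination -h
  have : ‖(w * z)‖ = ‖w‖ := by rw [norm_mul, hz, mul_one]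
  rw [h1] at this
  simp at hw this
  linarith

lemma expI_mul_expI_neg (t : ℝ) :
    Complex.exp ((t:ℂ) * I) * Complex.exp (-(t:ℂ) * I) = 1 := by
  rw [← Complex.exp_add]; ring_nf; exact Complex.exp_zero

/-- kernel identity: K + conj-K − 1 = poi -/
lemma kernel_eq {w : ℂ} (hw : ‖w‖ < 1) (t : ℝ) :
    (1 - w * Complex.exp (-(t:ℂ) * I))⁻¹
      + (1 - (starRingEnd ℂ w) * Complex.exp ((t:ℂ) * I))⁻¹ - 1
      = ((poi w t : ℝ) : ℂ) := by
  set ζ : ℂ := w * Complex.exp (-(t:ℂ) * I) with hζ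
  have habs : ‖(Complex.exp (-(t:ℂ) * I))‖ = 1 := by
    simpa using abs_expI (-t)
  have hζabs : ‖ζ‖ = ‖w‖ := by
    rw [hζ, norm_mul, habs, mul_one]
  have hcζ : starRingEnd ℂ ζ = (starRingEnd ℂ w) * Complex.exp ((t:ℂ) * I) := by
    rw [hζ, map_mul, ← Complex.exp_conj]
    congr 1
    simp [Complex.conj_ofReal, map_mul]
  have h1 : 1 - ζ ≠ 0 := one_sub_ne hw _ habs
  have h2 : 1 - starRingEnd ℂ ζ ≠ 0 := by
    intro h
    apply h1
    have := congrArg (starRingEnd ℂ) h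
    simpa using this
  have hfac : Complex.exp ((t:ℂ) * I) - w = Complex.exp ((t:ℂ) * I) * (1 - ζ) := by
    have h := expI_mul_expI_neg t
    rw [hζ]; linear_combination w * h
  have hsq : Complex.normSq (Complex.exp ((t:ℂ) * I) - w) = Complex.normSq (1 - ζ) := by
    rw [hfac, Complex.normSq_mul, Complex.normSq_eq_norm_sq, abs_expI]
    simp
  have hsqw : Complex.normSq w = Complex.normSq ζ := by
    rw [hζ, Complex.normSq_mul, Complex.normSq_eq_norm_sq (Complex.exp _), habs]
    simp
  have e1 : ((Complex.normSq (1 - ζ) : ℝ) : ℂ) = (1 - ζ) * (1 - starRingEnd ℂ ζ) := by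
    rw [← Complex.mul_conj]; simp
  have e2 : ((Complex.normSq ζ : ℝ) : ℂ) = ζ * starRingEnd ℂ ζ := by
    rw [← Complex.mul_conj]
  have hne : ((Complex.normSq (1 - ζ) : ℝ) : ℂ) ≠ 0 := by
    rw [e1]; exact mul_ne_zero h1 h2
  rw [poi, ← hcζ, hsq, hsqw, Complex.ofReal_div, Complex.ofReal_sub, Complex.ofReal_one]
  rw [eq_div_iff hne, e1, e2]
  field_simp
  ring


section Rep
variable {H : ℝ → ℂ} (hmeas : AEStronglyMeasurable H volume)
  (hint : IntervalIntegrable H volume 0 (2 * π))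

include hint in
lemma intInt_mul {g : ℝ → ℂ} (hg : Continuous g) :
    IntervalIntegrable (fun t => g t * H t) volume 0 (2*π) :=
  hint.continuousOn_mul hg.continuousOn

lemma two_pi_coeff (n : ℤ) :
    ((2*π:ℝ) : ℂ) * circCoeff H n
      = ∫ t in (0:ℝ)..(2*π), Complex.exp (-(n:ℂ) * t * I) * H t := by
  rw [circCoeff, ← mul_assoc, ← Complex.ofReal_mul]
  have : (2*π) * (1/(2*π)) = (1:ℝ) := by
    field_simp
  rw [this, Complex.ofReal_one, one_mul]

lemma coeff_norm_le (n : ℤ) :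
    ‖circCoeff H n‖ ≤ (1/(2*π)) * ∫ t in (0:ℝ)..(2*π), ‖H t‖ := by
  rw [circCoeff]
  rw [norm_mul]
  have h1 : ‖((1 / (2 * π) : ℝ) : ℂ)‖ = 1/(2*π) := by
    rw [Complex.norm_real, Real.norm_eq_abs, _root_.abs_of_nonneg (by positivity)]
  rw [h1]
  apply mul_le_mul_of_nonneg_left _ (by positivity)
  refine le_trans (intervalIntegral.norm_integral_le_integral_norm (by positivity)) ?_
  apply le_of_eq
  congr 1
  funext t
  rw [norm_mul]
  have : ‖Complex.exp (-(n:ℂ) * t * I)‖ = 1 := by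
    rw [Complex.norm_exp]
    norm_num [Complex.mul_re]
  rw [this, one_mul]

include hint in
lemma summable_series {w : ℂ} (hw : ‖w‖ < 1) :
    Summable (fun n : ℕ => circCoeff H n * w ^ n) := by
  set C : ℝ := (1/(2*π)) * ∫ t in (0:ℝ)..(2*π), ‖H t‖ with hC
  have hC0 : 0 ≤ C := by
    apply mul_nonneg (by positivity)
    apply intervalIntegral.integral_nonneg (by positivity)
    intro t _; positivity
  apply Summable.of_norm_bounded (g := fun n => C * ‖w‖^n)
    ((summable_geometric_of_lt_one (norm_nonneg w) hw).mul_left C)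
  intro n
  rw [norm_mul, norm_pow]
  exact mul_le_mul_of_nonneg_right (coeff_norm_le n) (by positivity)

include hmeas hint in
lemma partial_sum_eq {w : ℂ} (N : ℕ) :
    ∑ n ∈ Finset.range N, ((2*π:ℝ):ℂ) * circCoeff H n * w^n
      = ∫ t in (0:ℝ)..(2*π), (∑ n ∈ Finset.range N, (w * Complex.exp (-(t:ℂ) * I))^n) * H t := by
  have hcont : ∀ n : ℕ, Continuous fun t : ℝ => (w * Complex.exp (-(t:ℂ) * I))^n := by
    intro n; fun_prop
  have : ∀ t : ℝ, (∑ n ∈ Finset.range N, (w * Complex.exp (-(t:ℂ) * I))^n) * H t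
      = ∑ n ∈ Finset.range N, (w * Complex.exp (-(t:ℂ) * I))^n * H t := by
    intro t; rw [Finset.sum_mul]
  rw [intervalIntegral.integral_congr (fun t _ => this t)]
  rw [intervalIntegral.integral_finset_sum (fun n _ => intInt_mul hint (hcont n))]
  apply Finset.sum_congr rfl
  intro n _
  have hpt : ∀ t : ℝ, (w * Complex.exp (-(t:ℂ) * I))^n * H t
      = w^n * (Complex.exp (-(n:ℂ) * t * I) * H t) := by
    intro t
    rw [mul_pow, ← Complex.exp_nat_mul, mul_assoc]
    congr 3
    push_cast; ring
  rw [intervalIntegral.integral_congr (fun t _ => hpt t),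
    intervalIntegral.integral_const_mul]
  have h2 := two_pi_coeff (H:=H) (n:ℤ)
  push_cast at h2 ⊢
  rw [← h2]
  ring

include hmeas hint in
lemma integral_K {w : ℂ} (hw : ‖w‖ < 1) :
    ∫ t in (0:ℝ)..(2*π), (1 - w * Complex.exp (-(t:ℂ) * I))⁻¹ * H t
      = ((2*π:ℝ):ℂ) * ∑' n:ℕ, circCoeff H n * w^n := by
  have hsum := summable_series hint hw
  have hA : Tendsto (fun N => ∑ n ∈ Finset.range N, ((2*π:ℝ):ℂ) * circCoeff H n * w^n)
      atTop (𝓝 (((2*π:ℝ):ℂ) * ∑' n:ℕ, circCoeff H n * w^n)) := by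
    have := (hsum.hasSum.tendsto_sum_nat).const_mul ((2*π:ℝ):ℂ)
    simpa [Finset.mul_sum, mul_assoc] using this
  have hB : Tendsto (fun N => ∫ t in (0:ℝ)..(2*π),
      (∑ n ∈ Finset.range N, (w * Complex.exp (-(t:ℂ) * I))^n) * H t)
      atTop (𝓝 (∫ t in (0:ℝ)..(2*π), (1 - w * Complex.exp (-(t:ℂ) * I))⁻¹ * H t)) := by
    apply intervalIntegral.tendsto_integral_filter_of_dominated_convergence
      (fun t => (1 - ‖w‖)⁻¹ * ‖H t‖)
    · refine Eventually.of_forall (fun N => ?_)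
      apply AEStronglyMeasurable.mul _ (hmeas.restrict)
      exact (Continuous.aestronglyMeasurable (by fun_prop))
    · refine Eventually.of_forall (fun N => ?_)
      refine Eventually.of_forall (fun t => ?_)
      intro _
      rw [norm_mul]
      apply mul_le_mul_of_nonneg_right _ (norm_nonneg _)
      refine le_trans (norm_sum_le _ _) ?_
      have : ∀ n : ℕ, ‖(w * Complex.exp (-(t:ℂ) * I))^n‖ = ‖w‖^n := by
        intro n
        rw [norm_pow, norm_mul, abs_expNegI, mul_one]
      rw [Finset.sum_congr rfl (fun n _ => this n)]
      refine le_trans (Summable.sum_le_tsum _ (fun n _ => by positivity)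
        (summable_geometric_of_lt_one (norm_nonneg w) hw)) ?_
      rw [tsum_geometric_of_lt_one (norm_nonneg w) hw]
    · exact (hint.norm.const_mul _)
    · refine Eventually.of_forall (fun t => ?_)
      intro _
      have hlt : ‖w * Complex.exp (-(t:ℂ) * I)‖ < 1 := by
        rw [norm_mul, abs_expNegI, mul_one]; exact hw
      exact ((hasSum_geometric_of_norm_lt_one hlt).tendsto_sum_nat).mul_const _
  rw [← funext (fun N => partial_sum_eq hmeas hint (w := w) N)] at hB
  exact tendsto_nhds_unique hB hA


lemma poi_nonneg {w : ℂ} (hw : ‖w‖ < 1) (t : ℝ) : 0 ≤ poi w t := by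
  apply div_nonneg _ (Complex.normSq_nonneg _)
  have : Complex.normSq w < 1 := by
    rw [Complex.normSq_eq_norm_sq]
    have : ‖w‖ < 1 := by exact hw
    nlinarith [norm_nonneg w]
  linarith

lemma expI_sub_ne {w : ℂ} (hw : ‖w‖ < 1) (t : ℝ) : Complex.exp ((t:ℂ) * I) - w ≠ 0 := by
  intro h
  have : Complex.exp ((t:ℂ) * I) = w := by linear_combination h
  have h2 := abs_expI t
  rw [this] at h2
  rw [h2] at hw
  exact lt_irrefl _ hw

lemma poi_cont {w : ℂ} (hw : ‖w‖ < 1) : Continuous (poi w) := by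
  apply Continuous.div continuous_const
  · exact Complex.continuous_normSq.comp (by fun_prop)
  · intro t
    simpa [Complex.normSq_eq_zero] using expI_sub_ne hw t

include hmeas hint in
lemma integral_Kconj {w : ℂ} (hw : ‖w‖ < 1)
    (hneg : ∀ n : ℤ, n < 0 → circCoeff H n = 0) :
    ∫ t in (0:ℝ)..(2*π), (1 - (starRingEnd ℂ w) * Complex.exp ((t:ℂ) * I))⁻¹ * H t
      = ∫ t in (0:ℝ)..(2*π), H t := by
  have hcw : ‖starRingEnd ℂ w‖ < 1 := by rwa [RCLike.norm_conj]
  have hterm : ∀ n : ℕ, (∫ t in (0:ℝ)..(2*π),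
      ((starRingEnd ℂ w) * Complex.exp ((t:ℂ) * I))^n * H t)
      = (starRingEnd ℂ w)^n * (((2*π:ℝ):ℂ) * circCoeff H (-(n:ℤ))) := by
    intro n
    have hpt : ∀ t : ℝ, ((starRingEnd ℂ w) * Complex.exp ((t:ℂ) * I))^n * H t
        = (starRingEnd ℂ w)^n * (Complex.exp (-((-(n:ℤ)):ℂ) * t * I) * H t) := by
      intro t
      rw [mul_pow, ← Complex.exp_nat_mul, mul_assoc]
      congr 3
      push_cast; ring
    rw [intervalIntegral.integral_congr (fun t _ => hpt t),
      intervalIntegral.integral_const_mul]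
    congr 1
    rw [two_pi_coeff]
    refine intervalIntegral.integral_congr fun t _ => ?_
    congr 2
    push_cast
    ring
  have hps : ∀ N : ℕ, 1 ≤ N → (∫ t in (0:ℝ)..(2*π),
      (∑ n ∈ Finset.range N, ((starRingEnd ℂ w) * Complex.exp ((t:ℂ) * I))^n) * H t)
      = ∫ t in (0:ℝ)..(2*π), H t := by
    intro N hN
    have hsplit : ∀ t : ℝ, (∑ n ∈ Finset.range N, ((starRingEnd ℂ w) * Complex.exp ((t:ℂ) * I))^n) * H t
        = ∑ n ∈ Finset.range N, ((starRingEnd ℂ w) * Complex.exp ((t:ℂ) * I))^n * H t := by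
      intro t; rw [Finset.sum_mul]
    rw [intervalIntegral.integral_congr (fun t _ => hsplit t)]
    rw [intervalIntegral.integral_finset_sum (fun n _ => intInt_mul hint (by fun_prop))]
    rw [Finset.sum_congr rfl (fun n _ => hterm n)]
    rw [Finset.sum_eq_single_of_mem 0 (Finset.mem_range.2 hN)
      (fun n _ hn => by rw [hneg (-(n:ℤ)) (by omega), mul_zero, mul_zero])]
    simp only [pow_zero, one_mul, Nat.cast_zero, neg_zero]
    have h2 := two_pi_coeff (H:=H) (0:ℤ)
    rw [h2]
    refine intervalIntegral.integral_congr fun t _ => ?_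
    simp
  have hB : Tendsto (fun N => ∫ t in (0:ℝ)..(2*π),
      (∑ n ∈ Finset.range N, ((starRingEnd ℂ w) * Complex.exp ((t:ℂ) * I))^n) * H t)
      atTop (𝓝 (∫ t in (0:ℝ)..(2*π), (1 - (starRingEnd ℂ w) * Complex.exp ((t:ℂ) * I))⁻¹ * H t)) := by
    apply intervalIntegral.tendsto_integral_filter_of_dominated_convergence
      (fun t => (1 - ‖w‖)⁻¹ * ‖H t‖)
    · refine Eventually.of_forall (fun N => ?_)
      exact (Continuous.aestronglyMeasurable (by fun_prop)).mul hmeas.restrict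
    · refine Eventually.of_forall (fun N => ?_)
      refine Eventually.of_forall (fun t => ?_)
      intro _
      rw [norm_mul]
      apply mul_le_mul_of_nonneg_right _ (norm_nonneg _)
      refine le_trans (norm_sum_le _ _) ?_
      have h1 : ∀ n : ℕ, ‖((starRingEnd ℂ w) * Complex.exp ((t:ℂ) * I))^n‖ = ‖w‖^n := by
        intro n
        rw [norm_pow, norm_mul, abs_expI, mul_one,
          RCLike.norm_conj]
      rw [Finset.sum_congr rfl (fun n _ => h1 n)]
      refine le_trans (Summable.sum_le_tsum _ (fun n _ => by positivity)
        (summable_geometric_of_lt_one (norm_nonneg w) hw)) ?_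
      rw [tsum_geometric_of_lt_one (norm_nonneg w) hw]
    · exact (hint.norm.const_mul _)
    · refine Eventually.of_forall (fun t => ?_)
      intro _
      have hlt : ‖(starRingEnd ℂ w) * Complex.exp ((t:ℂ) * I)‖ < 1 := by
        rw [norm_mul, abs_expI, mul_one]; exact hcw
      exact ((hasSum_geometric_of_norm_lt_one hlt).tendsto_sum_nat).mul_const _
  have hA : Tendsto (fun N => ∫ t in (0:ℝ)..(2*π),
      (∑ n ∈ Finset.range N, ((starRingEnd ℂ w) * Complex.exp ((t:ℂ) * I))^n) * H t)
      atTop (𝓝 (∫ t in (0:ℝ)..(2*π), H t)) := by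
    apply Tendsto.congr' _ (tendsto_const_nhds)
    filter_upwards [eventually_ge_atTop 1] with N hN
    exact (hps N hN).symm
  exact tendsto_nhds_unique hB hA

include hmeas hint in
lemma rep {w : ℂ} (hw : ‖w‖ < 1)
    (hneg : ∀ n : ℤ, n < 0 → circCoeff H n = 0) :
    ∫ t in (0:ℝ)..(2*π), ((poi w t : ℝ) : ℂ) * H t
      = ((2*π:ℝ):ℂ) * ∑' n:ℕ, circCoeff H n * w^n := by
  have hcw : ‖starRingEnd ℂ w‖ < 1 := by rwa [RCLike.norm_conj]
  have hKc : Continuous fun t : ℝ => (1 - w * Complex.exp (-(t:ℂ) * I))⁻¹ :=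
    Continuous.inv₀ (by fun_prop) (fun t => one_sub_ne hw _ (abs_expNegI t))
  have hKc' : Continuous fun t : ℝ => (1 - (starRingEnd ℂ w) * Complex.exp ((t:ℂ) * I))⁻¹ :=
    Continuous.inv₀ (by fun_prop) (fun t => one_sub_ne hcw _ (abs_expI t))
  have hpt : ∀ t : ℝ, ((poi w t : ℝ) : ℂ) * H t
      = ((1 - w * Complex.exp (-(t:ℂ) * I))⁻¹ * H t
        + (1 - (starRingEnd ℂ w) * Complex.exp ((t:ℂ) * I))⁻¹ * H t) - H t := by
    intro t
    rw [← kernel_eq hw t]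
    ring
  rw [intervalIntegral.integral_congr (fun t _ => hpt t)]
  rw [intervalIntegral.integral_sub (IntervalIntegrable.add
      (intInt_mul hint hKc) (intInt_mul hint hKc')) hint]
  rw [intervalIntegral.integral_add (intInt_mul hint hKc) (intInt_mul hint hKc')]
  rw [integral_K hmeas hint hw, integral_Kconj hmeas hint hw hneg]
  ring

lemma circCoeff_one (n : ℤ) : circCoeff (fun _ => (1:ℂ)) n = if n = 0 then 1 else 0 := by
  rw [circCoeff]
  split_ifs with h
  · subst h
    simp only [Int.cast_zero, neg_zero, zero_mul, Complex.exp_zero, one_mul]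
    rw [intervalIntegral.integral_const, sub_zero, Complex.real_smul, mul_one,
      ← Complex.ofReal_mul]
    have : (1/(2*π)) * (2*π) = (1:ℝ) := by field_simp
    rw [this, Complex.ofReal_one]
  · have hc : (-(n:ℂ) * I) ≠ 0 := by
      simp [Complex.ext_iff, Complex.I_re, Complex.I_im]
      exact_mod_cast h
    have hpt : ∀ t : ℝ, Complex.exp (-(n:ℂ) * t * I) * 1 = Complex.exp ((-(n:ℂ) * I) * t) := by
      intro t; rw [mul_one]; congr 1; ring
    rw [intervalIntegral.integral_congr (fun t _ => hpt t)]
    rw [integral_exp_mul_complex hc]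
    have h1 : -(n:ℂ) * I * ((2*π:ℝ):ℂ) = ((-n : ℤ):ℂ) * (2*(π:ℂ) * I) := by push_cast; ring
    have h2 : Complex.exp (((-n : ℤ):ℂ) * (2*(π:ℂ) * I)) = 1 := Complex.exp_int_mul_two_pi_mul_I (-n)
    rw [h1, h2]
    simp

lemma tsum_one_eq {w : ℂ} : ∑' n:ℕ, circCoeff (fun _ => (1:ℂ)) n * w^n = 1 := by
  rw [tsum_eq_single 0]
  · rw [circCoeff_one]; simp
  · intro n hn
    rw [circCoeff_one]
    simp [hn]

lemma poi_mass {w : ℂ} (hw : ‖w‖ < 1) : ∫ t in (0:ℝ)..(2*π), poi w t = 2*π := by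
  have h := rep (H := fun _ => (1:ℂ)) aestronglyMeasurable_const
    intervalIntegrable_const hw
    (fun n hn => by rw [circCoeff_one]; simp [hn.ne])
  rw [tsum_one_eq, mul_one] at h
  have h2 : ∫ t in (0:ℝ)..(2*π), ((poi w t : ℝ) : ℂ) * 1 = ((∫ t in (0:ℝ)..(2*π), poi w t : ℝ) : ℂ) := by
    simp only [mul_one]
    exact intervalIntegral.integral_ofReal
  rw [h2] at h
  exact_mod_cast h

include hmeas hint in
lemma norm_tsum_le {w : ℂ} (hw : ‖w‖ < 1)
    (hneg : ∀ n : ℤ, n < 0 → circCoeff H n = 0) :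
    ‖∑' n:ℕ, circCoeff H n * w^n‖
      ≤ (1/(2*π)) * ∫ t in (0:ℝ)..(2*π), poi w t * ‖H t‖ := by
  have h := rep hmeas hint hw hneg
  have hπ : ((2*π:ℝ):ℂ) ≠ 0 := by
    simp [Real.pi_ne_zero]
  have htsum : ∑' n:ℕ, circCoeff H n * w^n
      = ((2*π:ℝ):ℂ)⁻¹ * ∫ t in (0:ℝ)..(2*π), ((poi w t : ℝ) : ℂ) * H t := by
    rw [h, ← mul_assoc, inv_mul_cancel₀ hπ, one_mul]
  rw [htsum, norm_mul]
  have h1 : ‖((2*π:ℝ):ℂ)⁻¹‖ = 1/(2*π) := by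
    rw [norm_inv, Complex.norm_real, Real.norm_eq_abs, _root_.abs_of_nonneg (by positivity)]
    rw [one_div]
  rw [h1]
  apply mul_le_mul_of_nonneg_left _ (by positivity)
  refine le_trans (intervalIntegral.norm_integral_le_integral_norm (by positivity)) ?_
  apply le_of_eq
  refine intervalIntegral.integral_congr fun t _ => ?_
  rw [norm_mul, Complex.norm_real, Real.norm_eq_abs, _root_.abs_of_nonneg (poi_nonneg hw t)]

include hint in
lemma poiH_int {α β : ℝ} (hsub : Set.uIcc α β ⊆ Set.uIcc 0 (2*π)) {w : ℂ} (hw : ‖w‖ < 1) :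
    IntervalIntegrable (fun t => poi w t * ‖H t‖) volume α β :=
  ((hint.norm.mono_set hsub).continuousOn_mul (poi_cont hw).continuousOn)

include hmeas hint in
lemma base_bound {θ M0 M1 : ℝ} (hθ : θ ∈ Set.Ioo (0:ℝ) 1) (hM0 : 0 < M0) (hM1 : 0 < M1)
    (hbd0 : ∀ᵐ t ∂(volume.restrict (Set.Ioo (2 * π * θ) (2 * π))), ‖H t‖ ≤ M0)
    (hbd1 : ∀ᵐ t ∂(volume.restrict (Set.Ioo (0:ℝ) (2 * π * θ))), ‖H t‖ ≤ M1)
    {w : ℂ} (hw : ‖w‖ < 1)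
    (hneg : ∀ n : ℤ, n < 0 → circCoeff H n = 0) :
    ‖∑' n:ℕ, circCoeff H n * w^n‖
      ≤ (1/(2*π)) * (M1 * ∫ t in (0:ℝ)..(2*π*θ), poi w t)
        + (1/(2*π)) * (M0 * ∫ t in (2*π*θ)..(2*π), poi w t) := by
  have hθ1 : 0 ≤ 2*π*θ := by have := hθ.1; positivity
  have hθ2 : 2*π*θ ≤ 2*π := by nlinarith [Real.pi_pos, hθ.2]
  have h2pi : (0:ℝ) ≤ 2*π := by positivity
  have hsub1 : Set.uIcc (0:ℝ) (2*π*θ) ⊆ Set.uIcc 0 (2*π) := by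
    rw [Set.uIcc_of_le hθ1, Set.uIcc_of_le h2pi]
    exact Set.Icc_subset_Icc le_rfl hθ2
  have hsub2 : Set.uIcc (2*π*θ) (2*π) ⊆ Set.uIcc 0 (2*π) := by
    rw [Set.uIcc_of_le hθ2, Set.uIcc_of_le h2pi]
    exact Set.Icc_subset_Icc hθ1 le_rfl
  refine le_trans (norm_tsum_le hmeas hint hw hneg) ?_
  have hsplit : ∫ t in (0:ℝ)..(2*π), poi w t * ‖H t‖
      = (∫ t in (0:ℝ)..(2*π*θ), poi w t * ‖H t‖)
        + ∫ t in (2*π*θ)..(2*π), poi w t * ‖H t‖ :=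
    (intervalIntegral.integral_add_adjacent_intervals
      (poiH_int hint hsub1 hw) (poiH_int hint hsub2 hw)).symm
  rw [hsplit, mul_add]
  have hmono1 : ∫ t in (0:ℝ)..(2*π*θ), poi w t * ‖H t‖
      ≤ M1 * ∫ t in (0:ℝ)..(2*π*θ), poi w t := by
    rw [← intervalIntegral.integral_const_mul]
    apply intervalIntegral.integral_mono_ae_restrict hθ1 (poiH_int hint hsub1 hw)
      (((poi_cont hw).intervalIntegrable _ _).const_mul M1)
    have hre : volume.restrict (Set.Icc (0:ℝ) (2*π*θ)) = volume.restrict (Set.Ioo (0:ℝ) (2*π*θ)) :=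
      (Measure.restrict_congr_set MeasureTheory.Ioo_ae_eq_Icc).symm
    rw [hre]
    filter_upwards [hbd1] with t ht
    calc poi w t * ‖H t‖ ≤ poi w t * M1 := by
          apply mul_le_mul_of_nonneg_left ht (poi_nonneg hw t)
      _ = M1 * poi w t := by ring
  have hmono0 : ∫ t in (2*π*θ)..(2*π), poi w t * ‖H t‖
      ≤ M0 * ∫ t in (2*π*θ)..(2*π), poi w t := by
    rw [← intervalIntegral.integral_const_mul]
    apply intervalIntegral.integral_mono_ae_restrict hθ2 (poiH_int hint hsub2 hw)
      (((poi_cont hw).intervalIntegrable _ _).const_mul M0)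
    have hre : volume.restrict (Set.Icc (2*π*θ) (2*π)) = volume.restrict (Set.Ioo (2*π*θ) (2*π)) :=
      (Measure.restrict_congr_set MeasureTheory.Ioo_ae_eq_Icc).symm
    rw [hre]
    filter_upwards [hbd0] with t ht
    calc poi w t * ‖H t‖ ≤ poi w t * M0 := by
          apply mul_le_mul_of_nonneg_left ht (poi_nonneg hw t)
      _ = M0 * poi w t := by ring
  have hpos : (0:ℝ) < 1/(2*π) := by positivity
  exact add_le_add (mul_le_mul_of_nonneg_left hmono1 hpos.le)
    (mul_le_mul_of_nonneg_left hmono0 hpos.le)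

end Rep
section Geom
variable {θ : ℝ}

noncomputable def Ath (θ : ℝ) : ℂ := Complex.exp ((π * θ : ℝ) * I)
noncomputable def Bth (θ : ℝ) : ℂ := Complex.exp (-(π * θ : ℝ) * I)
noncomputable def qth (z : ℂ) : ℂ := Complex.exp ((π : ℂ) * z * I)

lemma xiInv_eq (θ : ℝ) (z : ℂ) : xiInv θ z = (Ath θ - qth z) / (Bth θ - qth z) := rfl

lemma Ath_re : (Ath θ).re = Real.cos (π * θ) := by
  rw [Ath, Complex.exp_ofReal_mul_I_re]
lemma Ath_im : (Ath θ).im = Real.sin (π * θ) := by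
  rw [Ath, Complex.exp_ofReal_mul_I_im]
lemma Bth_re : (Bth θ).re = Real.cos (π * θ) := by
  have : (-(π * θ : ℝ) : ℂ) * I = ((-(π*θ):ℝ):ℂ) * I := by push_cast; ring
  rw [Bth, this, Complex.exp_ofReal_mul_I_re, Real.cos_neg]
lemma Bth_im : (Bth θ).im = -Real.sin (π * θ) := by
  have : (-(π * θ : ℝ) : ℂ) * I = ((-(π*θ):ℝ):ℂ) * I := by push_cast; ring
  rw [Bth, this, Complex.exp_ofReal_mul_I_im, Real.sin_neg]

lemma sin_pi_theta_pos (hθ : θ ∈ Set.Ioo (0:ℝ) 1) : 0 < Real.sin (π * θ) := by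
  apply Real.sin_pos_of_pos_of_lt_pi
  · exact mul_pos Real.pi_pos hθ.1
  · nlinarith [Real.pi_pos, hθ.2]

lemma qth_eq (z : ℂ) :
    qth z = (Real.exp (-π * z.im) : ℝ) * Complex.exp ((π * z.re : ℝ) * I) := by
  rw [qth]
  have h : (π : ℂ) * z * I = ((-π * z.im : ℝ) : ℂ) + ((π * z.re : ℝ) : ℂ) * I := by
    apply Complex.ext <;>
      simp [Complex.mul_re, Complex.mul_im, Complex.add_re, Complex.add_im] <;> ring
  rw [h, Complex.exp_add, ← Complex.ofReal_exp]

lemma qth_im (z : ℂ) : (qth z).im = Real.exp (-π * z.im) * Real.sin (π * z.re) := by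
  rw [qth_eq]
  simp only [Complex.mul_im, Complex.ofReal_re, Complex.ofReal_im,
    Complex.exp_ofReal_mul_I_im, Complex.exp_ofReal_mul_I_re, zero_mul, add_zero]

lemma qth_im_nonneg {z : ℂ} (h0 : 0 ≤ z.re) (h1 : z.re ≤ 1) : 0 ≤ (qth z).im := by
  rw [qth_im]
  apply mul_nonneg (Real.exp_pos _).le
  apply Real.sin_nonneg_of_nonneg_of_le_pi
  · positivity
  · nlinarith [Real.pi_pos]

lemma qth_im_pos {z : ℂ} (h0 : 0 < z.re) (h1 : z.re < 1) : 0 < (qth z).im := by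
  rw [qth_im]
  apply mul_pos (Real.exp_pos _)
  apply Real.sin_pos_of_pos_of_lt_pi
  · exact mul_pos Real.pi_pos h0
  · nlinarith [Real.pi_pos]

lemma normSq_diff (a b : ℂ) :
    Complex.normSq (starRingEnd ℂ a - b) - Complex.normSq (a - b) = 4 * a.im * b.im := by
  simp only [Complex.normSq_apply, Complex.sub_re, Complex.sub_im, Complex.conj_re,
    Complex.conj_im]
  ring

lemma Bth_eq_conj : Bth θ = starRingEnd ℂ (Ath θ) := by
  apply Complex.ext
  · rw [Bth_re, Complex.conj_re, Ath_re]
  · rw [Bth_im, Complex.conj_im, Ath_im]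

lemma denom_ne (hθ : θ ∈ Set.Ioo (0:ℝ) 1) {z : ℂ} (h0 : 0 ≤ z.re) (h1 : z.re ≤ 1) :
    Bth θ - qth z ≠ 0 := by
  intro h
  have hB : Bth θ = qth z := by linear_combination h
  have habs : ‖(Bth θ)‖ = 1 := by
    have : (-(π * θ : ℝ) : ℂ) * I = ((-(π*θ):ℝ):ℂ) * I := by push_cast; ring
    rw [Bth, this]; exact Complex.norm_exp_ofReal_mul_I _
  have hq : ‖(qth z)‖ = Real.exp (-π * z.im) := by
    rw [qth, Complex.norm_exp]
    congr 1
    simp [Complex.mul_re, Complex.mul_im]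
  have him : z.im = 0 := by
    rw [hB, hq] at habs
    have h0' : -π * z.im = 0 :=
      Real.exp_eq_exp.mp (habs.trans Real.exp_zero.symm)
    rcases mul_eq_zero.mp h0' with h | h
    · exact absurd (neg_eq_zero.mp h) Real.pi_ne_zero
    · exact h
  have hBim : (Bth θ).im = (qth z).im := by rw [hB]
  rw [Bth_im, qth_im, him, mul_zero, Real.exp_zero, one_mul] at hBim
  have h2 : 0 ≤ Real.sin (π * z.re) := by
    apply Real.sin_nonneg_of_nonneg_of_le_pi
    · positivity
    · nlinarith [Real.pi_pos]
  nlinarith [sin_pi_theta_pos hθ]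

lemma xiInv_abs_le (hθ : θ ∈ Set.Ioo (0:ℝ) 1) {z : ℂ} (h0 : 0 ≤ z.re) (h1 : z.re ≤ 1) :
    ‖(xiInv θ z)‖ ≤ 1 := by
  rw [xiInv_eq, norm_div]
  have hden : Bth θ - qth z ≠ 0 := denom_ne hθ h0 h1
  have hdenpos : 0 < ‖(Bth θ - qth z)‖ := by
    simpa [norm_pos_iff] using hden
  rw [div_le_one hdenpos]
  have hkey : Complex.normSq (Ath θ - qth z) ≤ Complex.normSq (Bth θ - qth z) := by
    have h := normSq_diff (Ath θ) (qth z)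
    rw [← Bth_eq_conj] at h
    have h1' : 0 ≤ (Ath θ).im := by rw [Ath_im]; exact (sin_pi_theta_pos hθ).le
    nlinarith [qth_im_nonneg h0 h1]
  rw [Complex.norm_def, Complex.norm_def]
  exact Real.sqrt_le_sqrt hkey

lemma xiInv_abs_lt (hθ : θ ∈ Set.Ioo (0:ℝ) 1) {z : ℂ} (h0 : 0 < z.re) (h1 : z.re < 1) :
    ‖(xiInv θ z)‖ < 1 := by
  rw [xiInv_eq, norm_div]
  have hden : Bth θ - qth z ≠ 0 := denom_ne hθ h0.le h1.le
  have hdenpos : 0 < ‖(Bth θ - qth z)‖ := by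
    simpa [norm_pos_iff] using hden
  rw [div_lt_one hdenpos]
  have hkey : Complex.normSq (Ath θ - qth z) < Complex.normSq (Bth θ - qth z) := by
    have h := normSq_diff (Ath θ) (qth z)
    rw [← Bth_eq_conj] at h
    have h1' : 0 < (Ath θ).im := by rw [Ath_im]; exact sin_pi_theta_pos hθ
    nlinarith [qth_im_pos h0 h1]
  rw [Complex.norm_def, Complex.norm_def]
  exact Real.sqrt_lt_sqrt (Complex.normSq_nonneg _) hkey

lemma qth_line0 {z : ℂ} (h : z.re = 0) : qth z = ((Real.exp (-π * z.im) : ℝ) : ℂ) := by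
  rw [qth_eq, h]
  norm_num

lemma qth_line1 {z : ℂ} (h : z.re = 1) : qth z = -((Real.exp (-π * z.im) : ℝ) : ℂ) := by
  rw [qth_eq, h]
  have : ((π * 1 : ℝ) : ℂ) * I = (π:ℂ) * I := by push_cast; ring
  rw [this, Complex.exp_pi_mul_I]
  ring

end Geom

section Geom2
variable {θ : ℝ}

/-- On the line `Re z = 0` the map avoids the closed arc `[0, 2πθ]`. -/
lemma line0_ne (hθ : θ ∈ Set.Ioo (0:ℝ) 1) {x : ℝ} (hx : 0 < x) {t : ℝ}
    (ht : t ∈ Set.Icc 0 (2*π*θ)) :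
    (Ath θ - (x:ℂ)) / (Bth θ - (x:ℂ)) ≠ Complex.exp ((t:ℂ) * I) := by
  have hπθ : π * θ < π := by nlinarith [Real.pi_pos, hθ.2]
  have hden : (Bth θ - (x:ℂ)).im ≠ 0 := by
    simp only [Complex.sub_im, Bth_im, Complex.ofReal_im, sub_zero]
    simpa using (sin_pi_theta_pos hθ).ne'
  have hden' : Bth θ - (x:ℂ) ≠ 0 := fun h => hden (by rw [h]; rfl)
  intro heq
  have h' : Ath θ - (x:ℂ) = Complex.exp ((t:ℂ) * I) * (Bth θ - (x:ℂ)) := by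
    field_simp at heq
    linear_combination heq
  have e1 : Complex.exp (((-(t/2):ℝ):ℂ) * I) * (Ath θ - (x:ℂ))
      = Complex.exp (((t/2:ℝ):ℂ) * I) * (Bth θ - (x:ℂ)) := by
    rw [h', ← mul_assoc, ← Complex.exp_add]
    congr 2
    push_cast; ring
  have e2 := congrArg Complex.im e1
  simp only [Complex.mul_im, Complex.sub_re, Complex.sub_im, Complex.ofReal_re,
    Complex.ofReal_im, Ath_re, Ath_im, Bth_re, Bth_im, sub_zero,
    Complex.exp_ofReal_mul_I_re, Complex.exp_ofReal_mul_I_im] at e2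
  rw [Real.cos_neg, Real.sin_neg] at e2
  have hkey : Real.sin (π*θ - t/2) = -(x * Real.sin (t/2)) := by
    rw [Real.sin_sub]; nlinarith [e2]
  have ht2 : 0 ≤ Real.sin (t/2) := by
    apply Real.sin_nonneg_of_nonneg_of_le_pi
    · linarith [ht.1]
    · nlinarith [ht.2, Real.pi_pos, hθ.2]
  have hs1 : 0 ≤ Real.sin (π*θ - t/2) := by
    apply Real.sin_nonneg_of_nonneg_of_le_pi
    · nlinarith [ht.2]
    · nlinarith [ht.1, Real.pi_pos]
  have hz : Real.sin (t/2) = 0 := by nlinarith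
  have hz2 : Real.sin (π*θ - t/2) = 0 := by rw [hkey, hz]; ring
  have hval : π*θ - t/2 = 0 := by
    have hlt : π*θ - t/2 < π := by nlinarith [ht.1, Real.pi_pos]
    have hgt : -π < π*θ - t/2 := by nlinarith [ht.2, Real.pi_pos]
    exact (Real.sin_eq_zero_iff_of_lt_of_lt hgt hlt).mp hz2
  have : t/2 = π*θ := by linarith
  rw [this] at hz
  exact absurd hz (sin_pi_theta_pos hθ).ne'

/-- On the line `Re z = 1` the map avoids the closed arc `[2πθ, 2π]`. -/
lemma line1_ne (hθ : θ ∈ Set.Ioo (0:ℝ) 1) {x : ℝ} (hx : 0 < x) {t : ℝ}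
    (ht : t ∈ Set.Icc (2*π*θ) (2*π)) :
    (Ath θ + (x:ℂ)) / (Bth θ + (x:ℂ)) ≠ Complex.exp ((t:ℂ) * I) := by
  have hπθ : π * θ < π := by nlinarith [Real.pi_pos, hθ.2]
  have hden : (Bth θ + (x:ℂ)).im ≠ 0 := by
    simp only [Complex.add_im, Bth_im, Complex.ofReal_im, add_zero]
    simpa using (sin_pi_theta_pos hθ).ne'
  have hden' : Bth θ + (x:ℂ) ≠ 0 := fun h => hden (by rw [h]; rfl)
  intro heq
  have h' : Ath θ + (x:ℂ) = Complex.exp ((t:ℂ) * I) * (Bth θ + (x:ℂ)) := by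
    field_simp at heq
    linear_combination heq
  have e1 : Complex.exp (((-(t/2):ℝ):ℂ) * I) * (Ath θ + (x:ℂ))
      = Complex.exp (((t/2:ℝ):ℂ) * I) * (Bth θ + (x:ℂ)) := by
    rw [h', ← mul_assoc, ← Complex.exp_add]
    congr 2
    push_cast; ring
  have e2 := congrArg Complex.im e1
  simp only [Complex.mul_im, Complex.add_re, Complex.add_im, Complex.ofReal_re,
    Complex.ofReal_im, Ath_re, Ath_im, Bth_re, Bth_im, add_zero,
    Complex.exp_ofReal_mul_I_re, Complex.exp_ofReal_mul_I_im] at e2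
  rw [Real.cos_neg, Real.sin_neg] at e2
  have hkey : Real.sin (π*θ - t/2) = x * Real.sin (t/2) := by
    rw [Real.sin_sub]; nlinarith [e2]
  have hθpos := sin_pi_theta_pos hθ
  have hπpos := Real.pi_pos
  have ht2 : 0 ≤ Real.sin (t/2) := by
    apply Real.sin_nonneg_of_nonneg_of_le_pi
    · nlinarith [ht.1, hθ.1]
    · linarith [ht.2]
  have hπθ0 : 0 < π*θ := mul_pos hπpos hθ.1
  have hs1 : Real.sin (π*θ - t/2) ≤ 0 := by
    apply Real.sin_nonpos_of_nonpos_of_neg_pi_le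
    · linarith [ht.1]
    · linarith [ht.2, hπθ0]
  have hz : Real.sin (π*θ - t/2) = 0 := by nlinarith
  have hval : π*θ - t/2 = 0 := by
    have hlt : π*θ - t/2 < π := by nlinarith [ht.1]
    have hgt : -π < π*θ - t/2 := by linarith [ht.2, hπθ0]
    exact (Real.sin_eq_zero_iff_of_lt_of_lt hgt hlt).mp hz
  rw [hkey] at hz
  have : t/2 = π*θ := by linarith
  rw [this] at hz
  rcases mul_eq_zero.mp hz with h | h
  · exact absurd h hx.ne'
  · exact absurd h hθpos.ne'

lemma xiInv_line0 {z : ℂ} (h : z.re = 0) :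
    xiInv θ z = (Ath θ - ((Real.exp (-π * z.im) : ℝ):ℂ)) / (Bth θ - ((Real.exp (-π * z.im) : ℝ):ℂ)) := by
  rw [xiInv_eq, qth_line0 h]

lemma xiInv_line1 {z : ℂ} (h : z.re = 1) :
    xiInv θ z = (Ath θ + ((Real.exp (-π * z.im) : ℝ):ℂ)) / (Bth θ + ((Real.exp (-π * z.im) : ℝ):ℂ)) := by
  rw [xiInv_eq, qth_line1 h]
  ring_nf

lemma xiInv_abs_line0 (hθ : θ ∈ Set.Ioo (0:ℝ) 1) {z : ℂ} (h : z.re = 0) :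
    ‖(xiInv θ z)‖ = 1 := by
  have hden : Bth θ - qth z ≠ 0 := denom_ne hθ (by rw [h]) (by rw [h]; norm_num)
  rw [xiInv_eq, norm_div]
  have hconj : Bth θ - qth z = starRingEnd ℂ (Ath θ - qth z) := by
    rw [map_sub, ← Bth_eq_conj, qth_line0 h, Complex.conj_ofReal]
  rw [hconj, Complex.norm_conj]
  have hne0 : Ath θ - qth z ≠ 0 := by
    intro h0
    exact hden (by rw [hconj, h0, map_zero])
  exact div_self (norm_ne_zero_iff.mpr hne0)

lemma xiInv_abs_line1 (hθ : θ ∈ Set.Ioo (0:ℝ) 1) {z : ℂ} (h : z.re = 1) :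
    ‖(xiInv θ z)‖ = 1 := by
  have hden : Bth θ - qth z ≠ 0 := denom_ne hθ (by rw [h]; norm_num) (by rw [h])
  rw [xiInv_eq, norm_div]
  have hconj : Bth θ - qth z = starRingEnd ℂ (Ath θ - qth z) := by
    rw [map_sub, ← Bth_eq_conj, qth_line1 h, map_neg, Complex.conj_ofReal]
  rw [hconj, Complex.norm_conj]
  have hne0 : Ath θ - qth z ≠ 0 := by
    intro h0
    exact hden (by rw [hconj, h0, map_zero])
  exact div_self (norm_ne_zero_iff.mpr hne0)

end Geom2

section Geom3
variable {θ : ℝ}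

lemma Bth_sub_ne (hθ : θ ∈ Set.Ioo (0:ℝ) 1) (y : ℝ) :
    Bth θ - ((Real.exp (-π * y) : ℝ):ℂ) ≠ 0 := by
  intro h
  have h2 : (Bth θ - ((Real.exp (-π * y) : ℝ):ℂ)).im = 0 := by rw [h]; rfl
  simp only [Complex.sub_im, Bth_im, Complex.ofReal_im, sub_zero] at h2
  nlinarith [sin_pi_theta_pos hθ]

lemma Bth_add_ne (hθ : θ ∈ Set.Ioo (0:ℝ) 1) (y : ℝ) :
    Bth θ + ((Real.exp (-π * y) : ℝ):ℂ) ≠ 0 := by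
  intro h
  have h2 : (Bth θ + ((Real.exp (-π * y) : ℝ):ℂ)).im = 0 := by rw [h]; rfl
  simp only [Complex.add_im, Bth_im, Complex.ofReal_im, add_zero] at h2
  nlinarith [sin_pi_theta_pos hθ]

lemma exists_dist0 (hθ : θ ∈ Set.Ioo (0:ℝ) 1) {Y : ℝ} (hY : 0 < Y) :
    ∃ d > 0, ∀ z : ℂ, z.re = 0 → |z.im| ≤ Y → ∀ t ∈ Set.Icc 0 (2*π*θ),
      d ≤ ‖(xiInv θ z - Complex.exp ((t:ℂ) * I))‖ := by
  set f : ℝ × ℝ → ℝ := fun p =>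
    ‖((Ath θ - ((Real.exp (-π * p.1) : ℝ):ℂ)) / (Bth θ - ((Real.exp (-π * p.1) : ℝ):ℂ))
      - Complex.exp ((p.2:ℂ) * I))‖ with hf
  have hcont : Continuous f := by
    apply continuous_norm.comp
    apply Continuous.sub
    · exact Continuous.div (by fun_prop) (by fun_prop) (fun p => Bth_sub_ne hθ p.1)
    · fun_prop
  have hθ1 : (0:ℝ) ≤ 2*π*θ := by have := hθ.1; positivity
  have hK : IsCompact ((Set.Icc (-Y) Y) ×ˢ (Set.Icc (0:ℝ) (2*π*θ))) :=
    isCompact_Icc.prod isCompact_Icc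
  have hne : ((Set.Icc (-Y) Y) ×ˢ (Set.Icc (0:ℝ) (2*π*θ))).Nonempty := by
    refine ⟨(0, 0), Set.mem_prod.mpr ⟨?_, ?_⟩⟩
    · simp only [Set.mem_Icc]; constructor <;> linarith
    · simp only [Set.mem_Icc]; exact ⟨le_rfl, hθ1⟩
  obtain ⟨p0, hp0, hmin⟩ := hK.exists_isMinOn hne hcont.continuousOn
  refine ⟨f p0, ?_, ?_⟩
  · have hne0 := line0_ne hθ (x := Real.exp (-π * p0.1)) (Real.exp_pos _) hp0.2
    have : (Ath θ - ((Real.exp (-π * p0.1) : ℝ):ℂ)) / (Bth θ - ((Real.exp (-π * p0.1) : ℝ):ℂ))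
        - Complex.exp ((p0.2:ℂ) * I) ≠ 0 := sub_ne_zero.mpr hne0
    exact norm_pos_iff.mpr this
  · intro z hz hzY t ht
    have hmem : (z.im, t) ∈ (Set.Icc (-Y) Y) ×ˢ (Set.Icc (0:ℝ) (2*π*θ)) := by
      constructor
      · exact abs_le.mp hzY
      · exact ht
    have hle := hmin hmem
    rw [xiInv_line0 hz]
    exact hle

lemma exists_dist1 (hθ : θ ∈ Set.Ioo (0:ℝ) 1) {Y : ℝ} (hY : 0 < Y) :
    ∃ d > 0, ∀ z : ℂ, z.re = 1 → |z.im| ≤ Y → ∀ t ∈ Set.Icc (2*π*θ) (2*π),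
      d ≤ ‖(xiInv θ z - Complex.exp ((t:ℂ) * I))‖ := by
  set f : ℝ × ℝ → ℝ := fun p =>
    ‖((Ath θ + ((Real.exp (-π * p.1) : ℝ):ℂ)) / (Bth θ + ((Real.exp (-π * p.1) : ℝ):ℂ))
      - Complex.exp ((p.2:ℂ) * I))‖ with hf
  have hcont : Continuous f := by
    apply continuous_norm.comp
    apply Continuous.sub
    · exact Continuous.div (by fun_prop) (by fun_prop) (fun p => Bth_add_ne hθ p.1)
    · fun_prop
  have hθ2 : 2*π*θ ≤ 2*π := by nlinarith [Real.pi_pos, hθ.2]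
  have hK : IsCompact ((Set.Icc (-Y) Y) ×ˢ (Set.Icc (2*π*θ) (2*π))) :=
    isCompact_Icc.prod isCompact_Icc
  have hne : ((Set.Icc (-Y) Y) ×ˢ (Set.Icc (2*π*θ) (2*π))).Nonempty := by
    refine ⟨(0, 2*π*θ), Set.mem_prod.mpr ⟨?_, ?_⟩⟩
    · simp only [Set.mem_Icc]; constructor <;> linarith
    · simp only [Set.mem_Icc]; exact ⟨le_rfl, hθ2⟩
  obtain ⟨p0, hp0, hmin⟩ := hK.exists_isMinOn hne hcont.continuousOn
  refine ⟨f p0, ?_, ?_⟩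
  · have hne0 := line1_ne hθ (x := Real.exp (-π * p0.1)) (Real.exp_pos _) hp0.2
    have : (Ath θ + ((Real.exp (-π * p0.1) : ℝ):ℂ)) / (Bth θ + ((Real.exp (-π * p0.1) : ℝ):ℂ))
        - Complex.exp ((p0.2:ℂ) * I) ≠ 0 := sub_ne_zero.mpr hne0
    exact norm_pos_iff.mpr this
  · intro z hz hzY t ht
    have hmem : (z.im, t) ∈ (Set.Icc (-Y) Y) ×ˢ (Set.Icc (2*π*θ) (2*π)) :=
      ⟨abs_le.mp hzY, ht⟩
    have hle := hmin hmem
    rw [xiInv_line1 hz]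
    exact hle

/-- Mass of the Poisson kernel of `r·w` over an arc at distance `d` from `w`. -/
lemma mass_small {w : ℂ} (hw1 : ‖w‖ = 1) {α β d r : ℝ} (hαβ : α ≤ β)
    (hd : 0 < d) (hr0 : 0 ≤ r) (hr1 : r < 1) (hrd : 1 - d/2 ≤ r)
    (hdist : ∀ t ∈ Set.Icc α β, d ≤ ‖(w - Complex.exp ((t:ℂ) * I))‖) :
    ∫ t in α..β, poi ((r:ℂ) * w) t ≤ (β - α) * ((1 - r^2) * (4 / d^2)) := by
  have hwr : ‖((r:ℂ) * w : ℂ)‖ < 1 := by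
    rw [norm_mul, hw1, mul_one,
      Complex.norm_real, Real.norm_eq_abs, _root_.abs_of_nonneg hr0]
    exact hr1
  have hpoint : ∀ t ∈ Set.Icc α β, poi ((r:ℂ) * w) t ≤ (1 - r^2) * (4 / d^2) := by
    intro t ht
    have h1 : Complex.normSq ((r:ℂ) * w) = r^2 := by
      rw [Complex.normSq_mul, Complex.normSq_ofReal, ← Complex.sq_norm, hw1]
      norm_num
      ring
    have hdist2 : d/2 ≤ ‖(Complex.exp ((t:ℂ) * I) - (r:ℂ) * w)‖ := by
      have h3 : ‖(w - (r:ℂ) * w)‖ = 1 - r := by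
        have : w - (r:ℂ) * w = (1 - (r:ℂ)) * w := by ring
        rw [this, norm_mul, hw1, mul_one]
        rw [show ((1:ℂ) - (r:ℂ)) = (((1 - r : ℝ)):ℂ) by push_cast; ring]
        rw [Complex.norm_real, Real.norm_eq_abs, _root_.abs_of_nonneg (by linarith)]
      have h4 := hdist t ht
      have h5 : ‖(w - Complex.exp ((t:ℂ) * I))‖
          ≤ ‖(w - (r:ℂ) * w)‖ + ‖((r:ℂ) * w - Complex.exp ((t:ℂ) * I))‖ := by
        have := norm_sub_le_norm_sub_add_norm_sub (w) ((r:ℂ)*w) (Complex.exp ((t:ℂ) * I))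
        exact this
      have h6 : ‖((r:ℂ) * w - Complex.exp ((t:ℂ) * I))‖
          = ‖(Complex.exp ((t:ℂ) * I) - (r:ℂ) * w)‖ := by
        rw [← norm_neg]; congr 1; ring
      rw [h6] at h5
      rw [h3] at h5
      linarith
    rw [poi, h1]
    have hnum : 0 ≤ 1 - r^2 := by nlinarith
    have hd2 : (d/2)^2 ≤ Complex.normSq (Complex.exp ((t:ℂ) * I) - (r:ℂ) * w) := by
      rw [← Complex.sq_norm]
      apply pow_le_pow_left₀ (by positivity) hdist2
    calc (1 - r^2) / Complex.normSq (Complex.exp ((t:ℂ) * I) - (r:ℂ) * w)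
        ≤ (1 - r^2) / ((d/2)^2) := by
          apply div_le_div_of_nonneg_left hnum (by positivity) hd2
      _ = (1 - r^2) * (4 / d^2) := by
          rw [show ((d/2:ℝ)^2) = d^2/4 by ring, div_div_eq_mul_div, mul_div_assoc]
  calc ∫ t in α..β, poi ((r:ℂ) * w) t
      ≤ ∫ _t in α..β, (1 - r^2) * (4 / d^2) := by
        apply intervalIntegral.integral_mono_on hαβ
          ((poi_cont hwr).intervalIntegrable _ _) intervalIntegrable_const
        exact hpoint
    _ = (β - α) * ((1 - r^2) * (4 / d^2)) := by
        rw [intervalIntegral.integral_const, smul_eq_mul]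

end Geom3

section Analytic

/-- Power-series sum of coefficients `a` with bound `C`; differentiable on the unit ball. -/
lemma psum_differentiableOn {a : ℕ → ℂ} {C : ℝ} (hC : ∀ n, ‖a n‖ ≤ C) :
    DifferentiableOn ℂ (fun w => ∑' n : ℕ, a n * w ^ n) (Metric.ball 0 1) := by
  set p : FormalMultilinearSeries ℂ ℂ ℂ :=
    fun n => (a n) • ContinuousMultilinearMap.mkPiAlgebraFin ℂ n ℂ with hp
  have hpn : ∀ n, ‖p n‖ ≤ ‖a n‖ := by
    intro n
    rw [hp]
    refine le_trans (norm_smul_le (a n) (ContinuousMultilinearMap.mkPiAlgebraFin ℂ n ℂ)) ?_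
    have h1 : ‖ContinuousMultilinearMap.mkPiAlgebraFin ℂ n ℂ‖ ≤ 1 := by
      simpa using ContinuousMultilinearMap.norm_mkPiAlgebraFin_le (𝕜 := ℂ) (n := n) (A := ℂ)
    calc ‖a n‖ * ‖ContinuousMultilinearMap.mkPiAlgebraFin ℂ n ℂ‖ ≤ ‖a n‖ * 1 :=
          mul_le_mul_of_nonneg_left h1 (norm_nonneg _)
      _ = ‖a n‖ := mul_one _
  have hrad : (1 : ENNReal) ≤ p.radius := by
    apply FormalMultilinearSeries.le_radius_of_bound p C
    intro n
    rw [NNReal.coe_one, one_pow, mul_one]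
    exact le_trans (hpn n) (hC n)
  have hpos : 0 < p.radius := lt_of_lt_of_le (by norm_num) hrad
  have hball := p.hasFPowerSeriesOnBall hpos
  have hsum : ∀ w : ℂ, p.sum w = ∑' n : ℕ, a n * w ^ n := by
    intro w
    rw [FormalMultilinearSeries.sum]
    apply tsum_congr
    intro n
    rw [hp]
    rw [ContinuousMultilinearMap.smul_apply, ContinuousMultilinearMap.mkPiAlgebraFin_apply]
    rw [List.prod_ofFn]
    simp [smul_eq_mul]
  have hdiff := hball.differentiableOn
  have hEq : Set.EqOn p.sum (fun w => ∑' n : ℕ, a n * w ^ n) (Metric.ball 0 1) :=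
    fun w _ => hsum w
  have hsub : Metric.ball (0:ℂ) 1 ⊆ Metric.eball 0 p.radius := by
    intro w hw
    rw [EMetric.mem_ball]
    calc edist w 0 < (1 : ENNReal) := by
          rw [edist_dist, ← ENNReal.ofReal_one]
          exact ENNReal.ofReal_lt_ofReal_iff_of_nonneg dist_nonneg |>.mpr
            (by simpa [Metric.mem_ball] using hw)
      _ ≤ p.radius := hrad
  exact (hdiff.mono hsub).congr (fun w hw => (hsum w).symm)

lemma xiInv_differentiableAt {θ : ℝ} {z : ℂ} (hz : Bth θ - qth z ≠ 0) :
    DifferentiableAt ℂ (xiInv θ) z := by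
  have h1 : xiInv θ = fun z => (Ath θ - qth z) / (Bth θ - qth z) := rfl
  rw [h1]
  apply DifferentiableAt.div
  · apply DifferentiableAt.sub (differentiableAt_const _)
    show DifferentiableAt ℂ (fun z : ℂ => Complex.exp ((π:ℂ) * z * I)) z
    fun_prop
  · apply DifferentiableAt.sub (differentiableAt_const _)
    show DifferentiableAt ℂ (fun z : ℂ => Complex.exp ((π:ℂ) * z * I)) z
    fun_prop
  · exact hz

lemma qth_continuous : Continuous qth := by
  show Continuous (fun z : ℂ => Complex.exp ((π:ℂ) * z * I))
  fun_prop

end Analytic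

section Vertical
variable {θ M0 M1 : ℝ} {H : ℝ → ℂ}
variable (hθ : θ ∈ Set.Ioo (0:ℝ) 1) (hM0 : 0 < M0) (hM1 : 0 < M1)
variable (hmeas : AEStronglyMeasurable H volume)
variable (hint : IntervalIntegrable H volume 0 (2 * π))
variable (hneg : ∀ n : ℤ, n < 0 → circCoeff H n = 0)
variable (hbd0 : ∀ᵐ t ∂(volume.restrict (Set.Ioo (2 * π * θ) (2 * π))), ‖H t‖ ≤ M0)
variable (hbd1 : ∀ᵐ t ∂(volume.restrict (Set.Ioo (0:ℝ) (2 * π * θ))), ‖H t‖ ≤ M1)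

lemma norm_r_mul {r : ℝ} (hr0 : 0 ≤ r) (hr1 : r < 1) {w : ℂ} (hw : ‖w‖ ≤ 1) :
    ‖(r:ℂ) * w‖ < 1 := by
  rw [norm_mul, Complex.norm_real, Real.norm_eq_abs,
    _root_.abs_of_nonneg hr0]
  calc r * ‖w‖ ≤ r * 1 := mul_le_mul_of_nonneg_left hw hr0
    _ < 1 := by linarith

include hθ hM0 hM1 hmeas hint hneg hbd0 hbd1 in
lemma mass_split {w : ℂ} (hw : ‖w‖ < 1) :
    (∫ t in (0:ℝ)..(2*π*θ), poi w t) + (∫ t in (2*π*θ)..(2*π), poi w t) = 2*π := by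
  have hadj : (∫ t in (0:ℝ)..(2*π*θ), poi w t) + ∫ t in (2*π*θ)..(2*π), poi w t
      = ∫ t in (0:ℝ)..(2*π), poi w t :=
    intervalIntegral.integral_add_adjacent_intervals
      ((poi_cont hw).intervalIntegrable _ _) ((poi_cont hw).intervalIntegrable _ _)
  rw [poi_mass hw] at hadj
  exact hadj

include hθ hM0 hM1 hmeas hint hneg hbd0 hbd1 in
lemma global_bound {w : ℂ} (hw : ‖w‖ < 1) :
    ‖∑' n:ℕ, circCoeff H n * w^n‖ ≤ max M0 M1 := by
  have hθ1 : (0:ℝ) ≤ 2*π*θ := by have := hθ.1; positivity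
  have hθ2 : 2*π*θ ≤ 2*π := by nlinarith [Real.pi_pos, hθ.2]
  set I1 := ∫ t in (0:ℝ)..(2*π*θ), poi w t with hI1
  set I0 := ∫ t in (2*π*θ)..(2*π), poi w t with hI0
  have hI1nn : 0 ≤ I1 :=
    intervalIntegral.integral_nonneg hθ1 (fun t _ => poi_nonneg hw t)
  have hI0nn : 0 ≤ I0 :=
    intervalIntegral.integral_nonneg hθ2 (fun t _ => poi_nonneg hw t)
  have hsum : I1 + I0 = 2*π := mass_split hθ hM0 hM1 hmeas hint hneg hbd0 hbd1 hw
  have hbb := base_bound hmeas hint hθ hM0 hM1 hbd0 hbd1 hw hneg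
  have h1 : M1 * I1 ≤ (max M0 M1) * I1 :=
    mul_le_mul_of_nonneg_right (le_max_right _ _) hI1nn
  have h0 : M0 * I0 ≤ (max M0 M1) * I0 :=
    mul_le_mul_of_nonneg_right (le_max_left _ _) hI0nn
  have hπ : (0:ℝ) < 1/(2*π) := by positivity
  calc ‖∑' n:ℕ, circCoeff H n * w^n‖
      ≤ (1/(2*π)) * (M1 * I1) + (1/(2*π)) * (M0 * I0) := hbb
    _ ≤ (1/(2*π)) * ((max M0 M1) * I1) + (1/(2*π)) * ((max M0 M1) * I0) :=
        add_le_add (mul_le_mul_of_nonneg_left h1 hπ.le) (mul_le_mul_of_nonneg_left h0 hπ.le)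
    _ = (max M0 M1) * ((1/(2*π)) * (I1 + I0)) := by ring
    _ = max M0 M1 := by
        rw [hsum]
        have : (1/(2*π)) * (2*π) = (1:ℝ) := by field_simp
        rw [this, mul_one]

include hθ hM0 hM1 hmeas hint hneg hbd0 hbd1 in
lemma vertical0 {ε' Y : ℝ} (hε' : 0 < ε') (hY : 0 < Y) :
    ∃ r₀ : ℝ, 0 ≤ r₀ ∧ r₀ < 1 ∧ ∀ r : ℝ, r₀ ≤ r → r < 1 → ∀ z : ℂ, z.re = 0 → |z.im| ≤ Y →
      ‖∑' n:ℕ, circCoeff H n * ((r:ℂ) * xiInv θ z)^n‖ ≤ (1+ε')*M0 := by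
  obtain ⟨d, hd, hdist⟩ := exists_dist0 hθ hY
  set Mx := max M0 M1 with hMxdef
  have hMx : 0 < Mx := lt_of_lt_of_le hM0 (le_max_left _ _)
  set η := ε' * M0 * d^2 / (8 * Mx) with hηdef
  have hη : 0 < η := by positivity
  refine ⟨max (max (1 - d/2) (1 - η)) 0,
    le_max_right _ _, max_lt (max_lt (by linarith) (by linarith)) one_pos, ?_⟩
  intro r hr hr1 z hz hzY
  have hr0 : (0:ℝ) ≤ r := le_trans (le_max_right _ _) hr
  have hrd : 1 - d/2 ≤ r := le_trans (le_trans (le_max_left _ _) (le_max_left _ _)) hr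
  have hrη : 1 - η ≤ r := le_trans (le_trans (le_max_right _ _) (le_max_left _ _)) hr
  set w := xiInv θ z with hwdef
  have hw1 : ‖w‖ = 1 := xiInv_abs_line0 hθ hz
  have hwr : ‖(r:ℂ) * w‖ < 1 := norm_r_mul hr0 hr1 hw1.le
  have hθ1 : (0:ℝ) ≤ 2*π*θ := by have := hθ.1; positivity
  have hθ2 : 2*π*θ ≤ 2*π := by nlinarith [Real.pi_pos, hθ.2]
  set I1 := ∫ t in (0:ℝ)..(2*π*θ), poi ((r:ℂ) * w) t with hI1def
  set I0 := ∫ t in (2*π*θ)..(2*π), poi ((r:ℂ) * w) t with hI0def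
  have hI1nn : 0 ≤ I1 :=
    intervalIntegral.integral_nonneg hθ1 (fun t _ => poi_nonneg hwr t)
  have hI0nn : 0 ≤ I0 :=
    intervalIntegral.integral_nonneg hθ2 (fun t _ => poi_nonneg hwr t)
  have hsum : I1 + I0 = 2*π := mass_split hθ hM0 hM1 hmeas hint hneg hbd0 hbd1 hwr
  have hbb := base_bound hmeas hint hθ hM0 hM1 hbd0 hbd1 hwr hneg
  have hm : I1 ≤ 2*π*θ*((1-r^2)*(4/d^2)) := by
    have := mass_small hw1 hθ1 hd hr0 hr1 hrd (fun t ht => hdist z hz hzY t ht)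
    rw [hI1def]
    calc I1 ≤ (2*π*θ - 0)*((1-r^2)*(4/d^2)) := this
      _ = 2*π*θ*((1-r^2)*(4/d^2)) := by ring
  have e1 : (1/(2*π))*(M1*I1) + (1/(2*π))*(M0*I0) = M0 + (1/(2*π))*((M1-M0)*I1) := by
    have h' : I0 = 2*π - I1 := by linarith
    rw [h']
    field_simp
    ring
  have e2 : (M1-M0)*I1 ≤ Mx*I1 :=
    mul_le_mul_of_nonneg_right (le_trans (by linarith) (le_max_right M0 M1)) hI1nn
  have e4 : (1/(2*π))*(Mx*I1) ≤ ε'*M0 := by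
    have hr2 : (0:ℝ) ≤ 1 - r^2 := by nlinarith
    have h3 : (1-r^2) ≤ 2*(1-r) := by nlinarith
    have h4 : 1 - r ≤ η := by linarith
    have h5 : θ*(1-r^2) ≤ 2*η := by nlinarith [hθ.2.le, hθ.1.le]
    have h6 : Mx*I1 ≤ (Mx*(4/d^2)*(2*π))*(θ*(1-r^2)) := by
      calc Mx*I1 ≤ Mx*(2*π*θ*((1-r^2)*(4/d^2))) := mul_le_mul_of_nonneg_left hm hMx.le
        _ = (Mx*(4/d^2)*(2*π))*(θ*(1-r^2)) := by ring
    have h7 : (Mx*(4/d^2)*(2*π))*(θ*(1-r^2)) ≤ (Mx*(4/d^2)*(2*π))*(2*η) := by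
      apply mul_le_mul_of_nonneg_left h5
      positivity
    have h8 : (Mx*(4/d^2)*(2*π))*(2*η) = 2*π*(ε'*M0) := by
      rw [hηdef]
      field_simp
      ring
    have h9 : Mx*I1 ≤ 2*π*(ε'*M0) := by linarith
    calc (1/(2*π))*(Mx*I1) ≤ (1/(2*π))*(2*π*(ε'*M0)) :=
          mul_le_mul_of_nonneg_left h9 (by positivity)
      _ = ε'*M0 := by field_simp
  calc ‖∑' n:ℕ, circCoeff H n * ((r:ℂ) * w)^n‖
      ≤ (1/(2*π))*(M1*I1) + (1/(2*π))*(M0*I0) := hbb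
    _ = M0 + (1/(2*π))*((M1-M0)*I1) := e1
    _ ≤ M0 + (1/(2*π))*(Mx*I1) := by
        have := mul_le_mul_of_nonneg_left e2 (by positivity : (0:ℝ) ≤ 1/(2*π))
        linarith
    _ ≤ M0 + ε'*M0 := by linarith
    _ = (1+ε')*M0 := by ring

include hθ hM0 hM1 hmeas hint hneg hbd0 hbd1 in
lemma vertical1 {ε' Y : ℝ} (hε' : 0 < ε') (hY : 0 < Y) :
    ∃ r₀ : ℝ, 0 ≤ r₀ ∧ r₀ < 1 ∧ ∀ r : ℝ, r₀ ≤ r → r < 1 → ∀ z : ℂ, z.re = 1 → |z.im| ≤ Y →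
      ‖∑' n:ℕ, circCoeff H n * ((r:ℂ) * xiInv θ z)^n‖ ≤ (1+ε')*M1 := by
  obtain ⟨d, hd, hdist⟩ := exists_dist1 hθ hY
  set Mx := max M0 M1 with hMxdef
  have hMx : 0 < Mx := lt_of_lt_of_le hM0 (le_max_left _ _)
  set η := ε' * M1 * d^2 / (8 * Mx) with hηdef
  have hη : 0 < η := by positivity
  refine ⟨max (max (1 - d/2) (1 - η)) 0,
    le_max_right _ _, max_lt (max_lt (by linarith) (by linarith)) one_pos, ?_⟩
  intro r hr hr1 z hz hzY
  have hr0 : (0:ℝ) ≤ r := le_trans (le_max_right _ _) hr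
  have hrd : 1 - d/2 ≤ r := le_trans (le_trans (le_max_left _ _) (le_max_left _ _)) hr
  have hrη : 1 - η ≤ r := le_trans (le_trans (le_max_right _ _) (le_max_left _ _)) hr
  set w := xiInv θ z with hwdef
  have hw1 : ‖w‖ = 1 := xiInv_abs_line1 hθ hz
  have hwr : ‖(r:ℂ) * w‖ < 1 := norm_r_mul hr0 hr1 hw1.le
  have hθ1 : (0:ℝ) ≤ 2*π*θ := by have := hθ.1; positivity
  have hθ2 : 2*π*θ ≤ 2*π := by nlinarith [Real.pi_pos, hθ.2]
  set I1 := ∫ t in (0:ℝ)..(2*π*θ), poi ((r:ℂ) * w) t with hI1def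
  set I0 := ∫ t in (2*π*θ)..(2*π), poi ((r:ℂ) * w) t with hI0def
  have hI1nn : 0 ≤ I1 :=
    intervalIntegral.integral_nonneg hθ1 (fun t _ => poi_nonneg hwr t)
  have hI0nn : 0 ≤ I0 :=
    intervalIntegral.integral_nonneg hθ2 (fun t _ => poi_nonneg hwr t)
  have hsum : I1 + I0 = 2*π := mass_split hθ hM0 hM1 hmeas hint hneg hbd0 hbd1 hwr
  have hbb := base_bound hmeas hint hθ hM0 hM1 hbd0 hbd1 hwr hneg
  have hm : I0 ≤ 2*π*((1-r^2)*(4/d^2)) := by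
    have h := mass_small hw1 hθ2 hd hr0 hr1 hrd (fun t ht => hdist z hz hzY t ht)
    have hba : 2*π - 2*π*θ ≤ 2*π := by nlinarith [Real.pi_pos, hθ.1]
    calc I0 ≤ (2*π - 2*π*θ)*((1-r^2)*(4/d^2)) := h
      _ ≤ 2*π*((1-r^2)*(4/d^2)) := by
          apply mul_le_mul_of_nonneg_right hba
          have hr2 : (0:ℝ) ≤ 1 - r^2 := by nlinarith
          positivity
  have e1 : (1/(2*π))*(M1*I1) + (1/(2*π))*(M0*I0) = M1 + (1/(2*π))*((M0-M1)*I0) := by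
    have h' : I1 = 2*π - I0 := by linarith
    rw [h']
    field_simp
    ring
  have e2 : (M0-M1)*I0 ≤ Mx*I0 :=
    mul_le_mul_of_nonneg_right (le_trans (by linarith) (le_max_left M0 M1)) hI0nn
  have e4 : (1/(2*π))*(Mx*I0) ≤ ε'*M1 := by
    have hr2 : (0:ℝ) ≤ 1 - r^2 := by nlinarith
    have h3 : (1-r^2) ≤ 2*(1-r) := by nlinarith
    have h4 : 1 - r ≤ η := by linarith
    have h5 : (1-r^2) ≤ 2*η := by nlinarith
    have h6 : Mx*I0 ≤ (Mx*(4/d^2)*(2*π))*(1-r^2) := by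
      calc Mx*I0 ≤ Mx*(2*π*((1-r^2)*(4/d^2))) := mul_le_mul_of_nonneg_left hm hMx.le
        _ = (Mx*(4/d^2)*(2*π))*(1-r^2) := by ring
    have h7 : (Mx*(4/d^2)*(2*π))*(1-r^2) ≤ (Mx*(4/d^2)*(2*π))*(2*η) := by
      apply mul_le_mul_of_nonneg_left h5
      positivity
    have h8 : (Mx*(4/d^2)*(2*π))*(2*η) = 2*π*(ε'*M1) := by
      rw [hηdef]
      field_simp
      ring
    have h9 : Mx*I0 ≤ 2*π*(ε'*M1) := by linarith
    calc (1/(2*π))*(Mx*I0) ≤ (1/(2*π))*(2*π*(ε'*M1)) :=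
          mul_le_mul_of_nonneg_left h9 (by positivity)
      _ = ε'*M1 := by field_simp
  calc ‖∑' n:ℕ, circCoeff H n * ((r:ℂ) * w)^n‖
      ≤ (1/(2*π))*(M1*I1) + (1/(2*π))*(M0*I0) := hbb
    _ = M1 + (1/(2*π))*((M0-M1)*I0) := e1
    _ ≤ M1 + (1/(2*π))*(Mx*I0) := by
        have := mul_le_mul_of_nonneg_left e2 (by positivity : (0:ℝ) ≤ 1/(2*π))
        linarith
    _ ≤ M1 + ε'*M1 := by linarith
    _ = (1+ε')*M1 := by ring

end Vertical

lemma psi_re (L0 L1 d : ℝ) (z : ℂ) :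
    ((z - 1) * (L0:ℂ) - z * (L1:ℂ) + (d:ℂ) * z^2).re
      = (z.re - 1)*L0 - z.re*L1 + d*(z.re^2 - z.im^2) := by
  simp [Complex.add_re, Complex.sub_re, Complex.mul_re, Complex.ofReal_re, Complex.ofReal_im,
    pow_two, Complex.mul_im, Complex.one_re, Complex.one_im, Complex.sub_im]
  try ring

end PoissonVI

open PoissonVI Filter Topology in
theorem poisson_series_three_lines
    (θ : ℝ) (hθ : θ ∈ Set.Ioo (0:ℝ) 1)
    (M0 M1 : ℝ) (hM0 : 0 < M0) (hM1 : 0 < M1)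
    (H : ℝ → ℂ) (hper : Function.Periodic H (2 * π))
    (hmeas : AEStronglyMeasurable H volume)
    (hint : IntervalIntegrable H volume 0 (2 * π))
    (hneg : ∀ n : ℤ, n < 0 → circCoeff H n = 0)
    (hbd0 : ∀ᵐ t ∂(volume.restrict (Set.Ioo (2 * π * θ) (2 * π))), ‖H t‖ ≤ M0)
    (hbd1 : ∀ᵐ t ∂(volume.restrict (Set.Ioo (0:ℝ) (2 * π * θ))), ‖H t‖ ≤ M1) :
    ∀ z : ℂ, 0 < z.re → z.re < 1 →
      ‖∑' n : ℕ, circCoeff H n * (xiInv θ z) ^ n‖ ≤ M0 ^ (1 - z.re) * M1 ^ z.re := by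
  intro z₀ hz0 hz1
  set u : ℂ → ℂ := fun w => ∑' n : ℕ, circCoeff H n * w ^ n with hu
  set Mx := max M0 M1 with hMxdef
  have hMxpos : 0 < Mx := lt_of_lt_of_le hM0 (le_max_left _ _)
  set L0 := Real.log M0 with hL0def
  set L1 := Real.log M1 with hL1def
  set Λ := |L0| + |L1| with hΛdef
  have hC : ∀ n : ℕ, ‖circCoeff H n‖ ≤ (1/(2*π)) * ∫ t in (0:ℝ)..(2*π), ‖H t‖ :=
    fun n => coeff_norm_le (n : ℤ)
  have hudiff : DifferentiableOn ℂ u (Metric.ball 0 1) := psum_differentiableOn hC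
  have hwstar : ‖(xiInv θ z₀)‖ < 1 := xiInv_abs_lt hθ hz0 hz1
  have hwstarmem : xiInv θ z₀ ∈ Metric.ball (0:ℂ) 1 := by
    simp only [Metric.mem_ball, dist_zero_right]
    exact hwstar
  have key : ∀ s : ℝ, 0 < s → ‖u (xiInv θ z₀)‖
      ≤ (1+s)*Real.exp (s*(1+z₀.im^2)) * (M0^(1-z₀.re)*M1^(z₀.re)) := by
    intro ε hε
    -- choose Y
    have hYex : ∃ Y : ℝ, 0 < Y ∧ |z₀.im| + 1 ≤ Y ∧ Mx * Real.exp (Λ + ε - ε*Y^2) ≤ 1 := by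
      set c := (Λ + ε + Real.log Mx)/ε with hcdef
      refine ⟨max (|z₀.im| + 1) (Real.sqrt c),
        lt_of_lt_of_le (by positivity) (le_max_left _ _), le_max_left _ _, ?_⟩
      set Y := max (|z₀.im| + 1) (Real.sqrt c) with hYdef
      have hY2 : c ≤ Y^2 := by
        rcases le_or_gt c 0 with h | h
        · nlinarith [sq_nonneg Y]
        · have h1 : Real.sqrt c ≤ Y := le_max_right _ _
          have h2 : Real.sqrt c ^ 2 = c := Real.sq_sqrt h.le
          nlinarith [Real.sqrt_nonneg c]
      have hee : Λ + ε - ε*Y^2 ≤ -(Real.log Mx) := by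
        have h1 : ε * c ≤ ε * Y^2 := mul_le_mul_of_nonneg_left hY2 hε.le
        have hc : ε * c = Λ + ε + Real.log Mx := by
          rw [hcdef]; field_simp
        nlinarith
      calc Mx * Real.exp (Λ + ε - ε*Y^2) ≤ Mx * Real.exp (-(Real.log Mx)) :=
            mul_le_mul_of_nonneg_left (Real.exp_le_exp.mpr hee) hMxpos.le
        _ = 1 := by
            rw [Real.exp_neg, Real.exp_log hMxpos]
            field_simp
    obtain ⟨Y, hYpos, hYim, hYbig⟩ := hYex
    obtain ⟨r₀a, hr₀a0, hr₀a1, hva⟩ :=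
      vertical0 hθ hM0 hM1 hmeas hint hneg hbd0 hbd1 hε hYpos
    obtain ⟨r₀b, hr₀b0, hr₀b1, hvb⟩ :=
      vertical1 hθ hM0 hM1 hmeas hint hneg hbd0 hbd1 hε hYpos
    set r₁ := max r₀a r₀b with hr₁def
    have hr₁1 : r₁ < 1 := max_lt hr₀a1 hr₀b1
    have hr₁0 : (0:ℝ) ≤ r₁ := le_trans hr₀a0 (le_max_left _ _)
    have main : ∀ r : ℝ, r₁ ≤ r → r < 1 →
        ‖u ((r:ℂ) * xiInv θ z₀)‖
          ≤ (1+ε)*Real.exp (ε*(1+z₀.im^2)) * (M0^(1-z₀.re)*M1^(z₀.re)) := by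
      intro r hr hr1
      have hr0 : (0:ℝ) ≤ r := le_trans hr₁0 hr
      set S : Set ℂ := Complex.re ⁻¹' (Set.Ioo (0:ℝ) 1) ∩ Complex.im ⁻¹' (Set.Ioo (-Y) Y)
        with hSdef
      set SCl : Set ℂ := Complex.re ⁻¹' (Set.Icc (0:ℝ) 1) ∩ Complex.im ⁻¹' (Set.Icc (-Y) Y)
        with hSCldef
      have hSopen : IsOpen S :=
        (isOpen_Ioo.preimage Complex.continuous_re).inter
          (isOpen_Ioo.preimage Complex.continuous_im)
      have hSsub : S ⊆ SCl := fun z hz =>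
        ⟨Set.Ioo_subset_Icc_self hz.1, Set.Ioo_subset_Icc_self hz.2⟩
      have hSclosed : IsClosed SCl :=
        (isClosed_Icc.preimage Complex.continuous_re).inter
          (isClosed_Icc.preimage Complex.continuous_im)
      have hSclosure : closure S ⊆ SCl := closure_minimal hSsub hSclosed
      set Φ : ℂ → ℂ := fun z => u ((r:ℂ) * xiInv θ z)
        * Complex.exp ((z - 1) * (L0:ℂ) - z * (L1:ℂ) + (ε:ℂ) * z^2) with hΦdef
      have habsmap : ∀ z ∈ SCl, ‖(r:ℂ) * xiInv θ z‖ < 1 := fun z hz =>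
        norm_r_mul hr0 hr1 (xiInv_abs_le hθ hz.1.1 hz.1.2)
      have hmapsTo : Set.MapsTo (fun z => (r:ℂ) * xiInv θ z) SCl (Metric.ball (0:ℂ) 1) := by
        intro z hz
        simp only [Metric.mem_ball, dist_zero_right]
        exact habsmap z hz
      have hΦdiff : DifferentiableOn ℂ Φ SCl := by
        intro z hz
        have hden := denom_ne hθ hz.1.1 hz.1.2
        have hxiD : DifferentiableAt ℂ (fun z => (r:ℂ) * xiInv θ z) z :=
          (xiInv_differentiableAt hden).const_mul _
        have h1 : DifferentiableWithinAt ℂ (fun z => u ((r:ℂ) * xiInv θ z)) SCl z := by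
          have hballD : DifferentiableWithinAt ℂ u (Metric.ball (0:ℂ) 1)
              ((fun z => (r:ℂ) * xiInv θ z) z) := hudiff _ (hmapsTo hz)
          have hcomp := DifferentiableWithinAt.comp (g := u)
            (f := fun z => (r:ℂ) * xiInv θ z) (t := Metric.ball (0:ℂ) 1) z hballD
            hxiD.differentiableWithinAt hmapsTo
          exact hcomp
        have h2 : DifferentiableAt ℂ
            (fun z : ℂ => Complex.exp ((z - 1) * (L0:ℂ) - z * (L1:ℂ) + (ε:ℂ) * z^2)) z := by
          fun_prop
        exact h1.mul h2.differentiableWithinAt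
      have hΦnorm : ∀ z : ℂ, ‖Φ z‖ = ‖u ((r:ℂ) * xiInv θ z)‖
          * Real.exp ((z.re - 1)*L0 - z.re*L1 + ε*(z.re^2 - z.im^2)) := by
        intro z
        rw [hΦdef]
        rw [norm_mul, Complex.norm_exp, psi_re]
      have hfront : ∀ z ∈ frontier S, ‖Φ z‖ ≤ (1+ε)*Real.exp ε := by
        intro z hzf
        rw [hSopen.frontier_eq] at hzf
        obtain ⟨hzc, hzns⟩ := hzf
        have hzcl := hSclosure hzc
        have hre := hzcl.1
        have him := hzcl.2
        rw [Set.mem_preimage, Set.mem_Icc] at hre him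
        have himabs : |z.im| ≤ Y := abs_le.mpr him
        have hone_le : (1:ℝ) ≤ Real.exp ε := Real.one_le_exp hε.le
        have hcases : z.re = 0 ∨ z.re = 1 ∨ |z.im| = Y := by
          by_contra hcon
          push_neg at hcon
          obtain ⟨h0, h1', hY'⟩ := hcon
          apply hzns
          constructor
          · rw [Set.mem_preimage, Set.mem_Ioo]
            exact ⟨lt_of_le_of_ne hre.1 (Ne.symm h0), lt_of_le_of_ne hre.2 h1'⟩
          · rw [Set.mem_preimage, Set.mem_Ioo]
            rcases abs_lt.mp (lt_of_le_of_ne himabs hY') with ⟨ha, hb⟩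
            exact ⟨ha, hb⟩
        rw [hΦnorm z]
        rcases hcases with h | h | h
        · -- re = 0
          have hub : ‖u ((r:ℂ) * xiInv θ z)‖ ≤ (1+ε)*M0 :=
            hva r (le_trans (le_max_left _ _) hr) hr1 z h himabs
          have hexp : Real.exp ((z.re - 1)*L0 - z.re*L1 + ε*(z.re^2 - z.im^2)) ≤ 1/M0 := by
            rw [h]
            have he1 : (0 - 1)*L0 - 0*L1 + ε*(0^2 - z.im^2) = -L0 - ε*z.im^2 := by ring
            rw [he1]
            calc Real.exp (-L0 - ε*z.im^2) ≤ Real.exp (-L0) :=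
                  Real.exp_le_exp.mpr (by nlinarith [sq_nonneg z.im])
              _ = 1/M0 := by rw [hL0def, Real.exp_neg, Real.exp_log hM0, one_div]
          calc ‖u ((r:ℂ) * xiInv θ z)‖ * Real.exp ((z.re - 1)*L0 - z.re*L1 + ε*(z.re^2 - z.im^2))
              ≤ ((1+ε)*M0) * (1/M0) := by
                apply mul_le_mul hub hexp (Real.exp_pos _).le (by positivity)
            _ = 1+ε := by field_simp
            _ ≤ (1+ε)*Real.exp ε := by nlinarith
        · -- re = 1
          have hub : ‖u ((r:ℂ) * xiInv θ z)‖ ≤ (1+ε)*M1 :=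
            hvb r (le_trans (le_max_right _ _) hr) hr1 z h himabs
          have hexp : Real.exp ((z.re - 1)*L0 - z.re*L1 + ε*(z.re^2 - z.im^2))
              ≤ Real.exp ε * (1/M1) := by
            rw [h]
            have he1 : (1 - 1)*L0 - 1*L1 + ε*(1^2 - z.im^2) = -L1 + (ε - ε*z.im^2) := by ring
            rw [he1]
            rw [Real.exp_add]
            rw [show (-L1 : ℝ) = -L1 by rfl]
            calc Real.exp (-L1) * Real.exp (ε - ε*z.im^2)
                ≤ Real.exp (-L1) * Real.exp ε := by
                  apply mul_le_mul_of_nonneg_left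
                    (Real.exp_le_exp.mpr (by nlinarith [sq_nonneg z.im])) (Real.exp_pos _).le
              _ = Real.exp ε * (1/M1) := by
                  rw [hL1def, Real.exp_neg, Real.exp_log hM1, one_div]
                  ring
          calc ‖u ((r:ℂ) * xiInv θ z)‖ * Real.exp ((z.re - 1)*L0 - z.re*L1 + ε*(z.re^2 - z.im^2))
              ≤ ((1+ε)*M1) * (Real.exp ε * (1/M1)) := by
                apply mul_le_mul hub hexp (Real.exp_pos _).le (by positivity)
            _ = (1+ε)*Real.exp ε := by field_simp
        · -- |im| = Y
          have hub : ‖u ((r:ℂ) * xiInv θ z)‖ ≤ Mx :=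
            global_bound hθ hM0 hM1 hmeas hint hneg hbd0 hbd1 (habsmap z hzcl)
          have hexp : Real.exp ((z.re - 1)*L0 - z.re*L1 + ε*(z.re^2 - z.im^2))
              ≤ Real.exp (Λ + ε - ε*Y^2) := by
            apply Real.exp_le_exp.mpr
            have hy2 : z.im^2 = Y^2 := by rw [← _root_.sq_abs z.im, h]
            have ha1 : (z.re - 1)*L0 ≤ |L0| := by
              have : |(z.re - 1)*L0| ≤ |L0| := by
                rw [abs_mul]
                have : |z.re - 1| ≤ 1 := by rw [abs_le]; constructor <;> linarith [hre.1, hre.2]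
                nlinarith [abs_nonneg L0]
              linarith [le_abs_self ((z.re - 1)*L0)]
            have ha2 : -(z.re*L1) ≤ |L1| := by
              have : |z.re*L1| ≤ |L1| := by
                rw [abs_mul]
                have : |z.re| ≤ 1 := by rw [abs_le]; constructor <;> linarith [hre.1, hre.2]
                nlinarith [abs_nonneg L1]
              linarith [neg_le_abs (z.re*L1)]
            have ha3 : ε*(z.re^2 - z.im^2) ≤ ε - ε*Y^2 := by
              rw [hy2]
              have : z.re^2 ≤ 1 := by nlinarith [hre.1, hre.2]
              nlinarith
            rw [hΛdef]
            linarith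
          calc ‖u ((r:ℂ) * xiInv θ z)‖ * Real.exp ((z.re - 1)*L0 - z.re*L1 + ε*(z.re^2 - z.im^2))
              ≤ Mx * Real.exp (Λ + ε - ε*Y^2) := by
                apply mul_le_mul hub hexp (Real.exp_pos _).le hMxpos.le
            _ ≤ 1 := hYbig
            _ ≤ (1+ε)*Real.exp ε := by nlinarith
      have hbdd : Bornology.IsBounded S := by
        apply (Metric.isBounded_ball (x := (0:ℂ)) (r := 2 + Y)).subset
        intro z hz
        simp only [Metric.mem_ball, dist_zero_right]
        have h1 : |z.re| ≤ 1 := by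
          rw [abs_le]; constructor <;> [linarith [hz.1.1]; linarith [hz.1.2]]
        have h2 : |z.im| ≤ Y := by
          rw [abs_le]; constructor <;> [linarith [hz.2.1]; linarith [hz.2.2]]
        calc ‖z‖ ≤ |z.re| + |z.im| := Complex.norm_le_abs_re_add_abs_im z
          _ < 2 + Y := by linarith
      have hz₀S : z₀ ∈ S := by
        constructor
        · rw [Set.mem_preimage, Set.mem_Ioo]; exact ⟨hz0, hz1⟩
        · rw [Set.mem_preimage, Set.mem_Ioo]
          rcases abs_lt.mp (show |z₀.im| < Y by linarith) with ⟨ha, hb⟩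
          exact ⟨ha, hb⟩
      have hPL : ‖Φ z₀‖ ≤ (1+ε)*Real.exp ε := by
        apply Complex.norm_le_of_forall_mem_frontier_norm_le hbdd
          ⟨hΦdiff.mono hSsub, hΦdiff.continuousOn.mono hSclosure⟩ hfront
        exact subset_closure hz₀S
      -- unwind
      rw [hΦnorm z₀] at hPL
      set E := (z₀.re - 1)*L0 - z₀.re*L1 + ε*(z₀.re^2 - z₀.im^2) with hEdef
      have hEpos : (0:ℝ) < Real.exp E := Real.exp_pos _
      have h1 : ‖u ((r:ℂ) * xiInv θ z₀)‖ ≤ ((1+ε)*Real.exp ε) * Real.exp (-E) := by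
        have hd := (le_div_iff₀ hEpos).mpr hPL
        calc ‖u ((r:ℂ) * xiInv θ z₀)‖ ≤ ((1+ε)*Real.exp ε) / Real.exp E := hd
          _ = ((1+ε)*Real.exp ε) * Real.exp (-E) := by
            rw [Real.exp_neg, div_eq_mul_inv]
      have h2 : ((1+ε)*Real.exp ε) * Real.exp (-E)
          ≤ (1+ε)*Real.exp (ε*(1+z₀.im^2)) * (M0^(1-z₀.re)*M1^(z₀.re)) := by
        have hsplit : -E = ((1-z₀.re)*L0 + z₀.re*L1) + ε*(z₀.im^2 - z₀.re^2) := by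
          rw [hEdef]; ring
        rw [hsplit, Real.exp_add, Real.exp_add]
        have hM0r : Real.exp ((1-z₀.re)*L0) = M0^(1-z₀.re) := by
          rw [hL0def, Real.rpow_def_of_pos hM0, mul_comm]
        have hMr : Real.exp ((1-z₀.re)*L0) * Real.exp (z₀.re*L1) = M0^(1-z₀.re)*M1^(z₀.re) := by
          rw [hM0r, hL1def, Real.rpow_def_of_pos hM1, mul_comm z₀.re]
        have hee : Real.exp ε * Real.exp (ε*(z₀.im^2 - z₀.re^2)) ≤ Real.exp (ε*(1+z₀.im^2)) := by
          rw [← Real.exp_add]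
          apply Real.exp_le_exp.mpr
          nlinarith [sq_nonneg z₀.re]
        calc (1+ε)*Real.exp ε * (Real.exp ((1-z₀.re)*L0) * Real.exp (z₀.re*L1)
              * Real.exp (ε*(z₀.im^2 - z₀.re^2)))
            = ((1+ε) * (Real.exp ε * Real.exp (ε*(z₀.im^2 - z₀.re^2))))
              * (Real.exp ((1-z₀.re)*L0) * Real.exp (z₀.re*L1)) := by ring
          _ ≤ ((1+ε) * Real.exp (ε*(1+z₀.im^2)))
              * (Real.exp ((1-z₀.re)*L0) * Real.exp (z₀.re*L1)) := by
              apply mul_le_mul_of_nonneg_right _ (by positivity)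
              apply mul_le_mul_of_nonneg_left hee (by linarith)
          _ = (1+ε)*Real.exp (ε*(1+z₀.im^2)) * (M0^(1-z₀.re)*M1^(z₀.re)) := by
              rw [hMr]
      linarith
    -- limit r → 1⁻
    have hcontAt : ContinuousAt u (xiInv θ z₀) :=
      hudiff.continuousOn.continuousAt (Metric.isOpen_ball.mem_nhds hwstarmem)
    have hinner : Tendsto (fun r : ℝ => ((r:ℂ) * xiInv θ z₀)) (nhdsWithin 1 (Set.Iio 1))
        (nhds (xiInv θ z₀)) := by
      have hc : Continuous (fun r : ℝ => ((r:ℂ) * xiInv θ z₀)) :=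
        (Complex.continuous_ofReal).mul continuous_const
      have := hc.tendsto 1
      simp only [Complex.ofReal_one, one_mul] at this
      exact this.mono_left nhdsWithin_le_nhds
    have htend : Tendsto (fun r : ℝ => ‖u ((r:ℂ) * xiInv θ z₀)‖) (nhdsWithin 1 (Set.Iio 1))
        (nhds ‖u (xiInv θ z₀)‖) := ((hcontAt.tendsto.comp hinner).norm)
    apply le_of_tendsto htend
    have hIoo : Set.Ioo r₁ 1 ∈ nhdsWithin (1:ℝ) (Set.Iio 1) :=
      Ioo_mem_nhdsLT hr₁1
    filter_upwards [hIoo] with r hrIoo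
    exact main r hrIoo.1.le hrIoo.2
  -- now let s → 0⁺
  have hlim : Tendsto (fun s : ℝ => (1+s)*Real.exp (s*(1+z₀.im^2)) * (M0^(1-z₀.re)*M1^(z₀.re)))
      (nhdsWithin 0 (Set.Ioi 0)) (nhds (M0^(1-z₀.re)*M1^(z₀.re))) := by
    have hc : Continuous (fun s : ℝ => (1+s)*Real.exp (s*(1+z₀.im^2)) * (M0^(1-z₀.re)*M1^(z₀.re))) := by
      fun_prop
    have := hc.tendsto 0
    simp only [add_zero, zero_mul, Real.exp_zero, mul_one, one_mul] at this
    exact this.mono_left nhdsWithin_le_nhds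
  have hev : ∀ᶠ s in nhdsWithin (0:ℝ) (Set.Ioi 0), ‖u (xiInv θ z₀)‖
      ≤ (1+s)*Real.exp (s*(1+z₀.im^2)) * (M0^(1-z₀.re)*M1^(z₀.re)) := by
    filter_upwards [self_mem_nhdsWithin] with s hs
    exact key s hs
  exact ge_of_tendsto hlim hev
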